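/- Let L be a self-adjoint, positive definite Laurent operator on ℓ²(ℤ) whose symbol f(ω) = Σ_k A_k e^{2πikω} has coefficients satisfying Σ_k |A_k| w(k) < ∞ for a weight w satisfying the GRS-condition. Then the inverse operator L⁻¹ is also a Laurent operator whose coefficients B_k satisfy Σ_k |B_k| w(k) < ∞. -/

import Mathlib

open Filter Complex
open scoped ENNReal NNReal

namespace LWW

structure Weight where
  w : ℤ → ℝ
  pos : ∀ k, 0 < w k
  sub : ∀ k l, w (k + l) ≤ w k * w l
  one_le : ∀ k, 1 ≤ w k

def Ww (W : Weight) : Type := {a : ℤ → ℂ // Summable fun k => ‖a k‖ * W.w k}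

namespace Ww

variable {W : Weight}

lemma wnn (k : ℤ) : (0:ℝ) ≤ W.w k := (W.pos k).le

lemma term_nonneg (a : Ww W) (k : ℤ) : 0 ≤ ‖a.1 k‖ * W.w k :=
  mul_nonneg (norm_nonneg _) (wnn k)

lemma summable_norm (a : Ww W) : Summable fun k => ‖a.1 k‖ :=
  a.2.of_nonneg_of_le (fun _ => norm_nonneg _)
    (fun k => le_mul_of_one_le_right (norm_nonneg _) (W.one_le k))

/-- the (future) norm -/
noncomputable def nw (a : Ww W) : ℝ := ∑' k, ‖a.1 k‖ * W.w k

lemma coeff_w_le (a : Ww W) (j : ℤ) : ‖a.1 j‖ * W.w j ≤ nw a :=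
  Summable.le_tsum a.2 j fun k _ => term_nonneg a k

lemma coeff_le (a : Ww W) (j : ℤ) : ‖a.1 j‖ ≤ nw a :=
  le_trans (le_mul_of_one_le_right (norm_nonneg _) (W.one_le j)) (coeff_w_le a j)

lemma nw_nonneg (a : Ww W) : 0 ≤ nw a := tsum_nonneg (term_nonneg a)

/-- convolution -/
noncomputable def conv (a b : Ww W) (k : ℤ) : ℂ := ∑' l, a.1 l * b.1 (k - l)

lemma summable_conv_norm (a b : Ww W) (k : ℤ) :
    Summable fun l => ‖a.1 l * b.1 (k - l)‖ := by
  refine Summable.of_nonneg_of_le (fun _ => norm_nonneg _) (fun l => ?_)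
    ((summable_norm a).mul_right (nw b))
  exact (norm_mul_le _ _).trans
    (mul_le_mul_of_nonneg_left (coeff_le b _) (norm_nonneg _))

lemma summable_conv (a b : Ww W) (k : ℤ) :
    Summable fun l => a.1 l * b.1 (k - l) :=
  (summable_conv_norm a b k).of_norm

/-- reindexing equivalence -/
def eAux : ℤ × ℤ ≃ ℤ × ℤ where
  toFun p := (p.1 + p.2, p.1)
  invFun q := (q.2, q.1 - q.2)
  left_inv p := by simp
  right_inv q := by simp

lemma summable_H (a b : Ww W) :
    Summable fun p : ℤ × ℤ =>
      (‖a.1 p.2‖ * W.w p.2) * (‖b.1 (p.1 - p.2)‖ * W.w (p.1 - p.2)) := by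
  have hP : Summable fun p : ℤ × ℤ => (‖a.1 p.1‖ * W.w p.1) * (‖b.1 p.2‖ * W.w p.2) :=
    a.2.mul_of_nonneg b.2 (fun k => term_nonneg a k) (fun k => term_nonneg b k)
  set F : ℤ × ℤ → ℝ := fun p =>
      (‖a.1 p.2‖ * W.w p.2) * (‖b.1 (p.1 - p.2)‖ * W.w (p.1 - p.2)) with hF
  have hcomp : (fun p : ℤ × ℤ => F (eAux p))
      = fun p : ℤ × ℤ => (‖a.1 p.1‖ * W.w p.1) * (‖b.1 p.2‖ * W.w p.2) := by
    funext p; simp [hF, eAux]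
  have hS : Summable (F ∘ eAux) := by
    have : (F ∘ eAux) = fun p : ℤ × ℤ => (‖a.1 p.1‖ * W.w p.1) * (‖b.1 p.2‖ * W.w p.2) := by
      funext p; simp [hF, eAux, Function.comp]
    rw [this]; exact hP
  exact (Equiv.summable_iff eAux (f := F)).1 hS

lemma conv_norm_le (a b : Ww W) (k : ℤ) :
    ‖conv a b k‖ * W.w k ≤
      ∑' l, (‖a.1 l‖ * W.w l) * (‖b.1 (k - l)‖ * W.w (k - l)) := by
  have h1 : ‖conv a b k‖ ≤ ∑' l, ‖a.1 l * b.1 (k - l)‖ :=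
    norm_tsum_le_tsum_norm (summable_conv_norm a b k)
  have hterm : ∀ l, ‖a.1 l * b.1 (k - l)‖ * W.w k ≤
      (‖a.1 l‖ * W.w l) * (‖b.1 (k - l)‖ * W.w (k - l)) := by
    intro l
    have hwk : W.w k ≤ W.w l * W.w (k - l) := by
      have := W.sub l (k - l)
      simpa using this
    calc ‖a.1 l * b.1 (k - l)‖ * W.w k
        ≤ (‖a.1 l‖ * ‖b.1 (k - l)‖) * (W.w l * W.w (k - l)) := by
          apply mul_le_mul (norm_mul_le _ _) hwk (wnn k) (by positivity)
      _ = (‖a.1 l‖ * W.w l) * (‖b.1 (k - l)‖ * W.w (k - l)) := by ring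
  calc ‖conv a b k‖ * W.w k
      ≤ (∑' l, ‖a.1 l * b.1 (k - l)‖) * W.w k :=
        mul_le_mul_of_nonneg_right h1 (wnn k)
    _ = ∑' l, ‖a.1 l * b.1 (k - l)‖ * W.w k :=
        ((summable_conv_norm a b k).tsum_mul_right _).symm
    _ ≤ _ := Summable.tsum_le_tsum hterm ((summable_conv_norm a b k).mul_right _)
        ((summable_H a b).prod_factor k)

lemma summable_convW (a b : Ww W) : Summable fun k => ‖conv a b k‖ * W.w k :=
  ((summable_H a b).prod).of_nonneg_of_le
    (fun k => mul_nonneg (norm_nonneg _) (wnn k)) (conv_norm_le a b)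

lemma tsum_convW_le (a b : Ww W) :
    (∑' k, ‖conv a b k‖ * W.w k) ≤ nw a * nw b := by
  have hP : Summable fun p : ℤ × ℤ => (‖a.1 p.1‖ * W.w p.1) * (‖b.1 p.2‖ * W.w p.2) :=
    a.2.mul_of_nonneg b.2 (fun k => term_nonneg a k) (fun k => term_nonneg b k)
  have h2 : (∑' k, ∑' l, (‖a.1 l‖ * W.w l) * (‖b.1 (k - l)‖ * W.w (k - l)))
      = nw a * nw b := by
    rw [← Summable.tsum_prod (summable_H a b)]
    rw [← Equiv.tsum_eq eAux
      (f := fun p : ℤ × ℤ => (‖a.1 p.2‖ * W.w p.2) * (‖b.1 (p.1 - p.2)‖ * W.w (p.1 - p.2)))]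
    have : ∀ q : ℤ × ℤ,
        (fun p : ℤ × ℤ => (‖a.1 p.2‖ * W.w p.2) * (‖b.1 (p.1 - p.2)‖ * W.w (p.1 - p.2)))
          (eAux q) = (‖a.1 q.1‖ * W.w q.1) * (‖b.1 q.2‖ * W.w q.2) := by
      intro q; simp [eAux]
    rw [tsum_congr this]
    exact (Summable.tsum_mul_tsum a.2 b.2 hP).symm
  calc (∑' k, ‖conv a b k‖ * W.w k)
      ≤ ∑' k, ∑' l, (‖a.1 l‖ * W.w l) * (‖b.1 (k - l)‖ * W.w (k - l)) :=
        Summable.tsum_le_tsum (conv_norm_le a b) (summable_convW a b) ((summable_H a b).prod)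
    _ = nw a * nw b := h2

/-- delta functions -/
noncomputable def delta (n : ℤ) : Ww W :=
  ⟨fun k => if k = n then 1 else 0, by
    have h : (fun k => ‖(if k = n then (1:ℂ) else 0)‖ * W.w k)
        = fun k => if k = n then W.w n else 0 := by
      funext k; by_cases h : k = n <;> simp [h]
    rw [h]; exact (hasSum_ite_eq n (W.w n)).summable⟩

noncomputable instance : Add (Ww W) :=
  ⟨fun a b => ⟨fun k => a.1 k + b.1 k, by
    refine Summable.of_nonneg_of_le (fun k => mul_nonneg (norm_nonneg _) (wnn k))
      (fun k => ?_) (a.2.add b.2)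
    calc ‖a.1 k + b.1 k‖ * W.w k ≤ (‖a.1 k‖ + ‖b.1 k‖) * W.w k := by
          exact mul_le_mul_of_nonneg_right (norm_add_le _ _) (wnn k)
      _ = ‖a.1 k‖ * W.w k + ‖b.1 k‖ * W.w k := by ring⟩⟩

noncomputable instance : Neg (Ww W) :=
  ⟨fun a => ⟨fun k => -(a.1 k), a.2.congr (fun k => by simp)⟩⟩

noncomputable instance : Zero (Ww W) :=
  ⟨⟨fun _ => 0, by simpa using summable_zero⟩⟩

noncomputable instance : SMul ℂ (Ww W) :=
  ⟨fun c a => ⟨fun k => c * a.1 k, by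
    refine ((a.2.mul_left ‖c‖).congr (fun k => ?_))
    simp [norm_mul]; ring⟩⟩

@[simp] lemma add_apply (a b : Ww W) (k : ℤ) : (a + b).1 k = a.1 k + b.1 k := rfl
@[simp] lemma neg_apply (a : Ww W) (k : ℤ) : (-a).1 k = -(a.1 k) := rfl
@[simp] lemma zero_apply (k : ℤ) : (0 : Ww W).1 k = 0 := rfl
@[simp] lemma smul_apply (c : ℂ) (a : Ww W) (k : ℤ) : (c • a).1 k = c * a.1 k := rfl

noncomputable instance : AddCommGroup (Ww W) where
  add_assoc a b c := Subtype.ext (funext fun k => add_assoc _ _ _)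
  zero_add a := Subtype.ext (funext fun k => zero_add _)
  add_zero a := Subtype.ext (funext fun k => add_zero _)
  add_comm a b := Subtype.ext (funext fun k => add_comm _ _)
  neg_add_cancel a := Subtype.ext (funext fun k => neg_add_cancel _)
  nsmul := nsmulRec
  zsmul := zsmulRec

noncomputable instance : Mul (Ww W) :=
  ⟨fun a b => ⟨conv a b, summable_convW a b⟩⟩

@[simp] lemma mul_apply (a b : Ww W) (k : ℤ) :
    (a * b).1 k = ∑' l, a.1 l * b.1 (k - l) := rfl

noncomputable instance : One (Ww W) := ⟨delta 0⟩

@[simp] lemma one_apply (k : ℤ) : (1 : Ww W).1 k = if k = 0 then 1 else 0 := rfl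

lemma mul_comm' (a b : Ww W) : a * b = b * a := by
  refine Subtype.ext (funext fun k => ?_)
  show conv a b k = conv b a k
  unfold conv
  rw [← Equiv.tsum_eq (Equiv.subLeft k) (fun l => a.1 l * b.1 (k - l))]
  apply tsum_congr; intro l
  simp [Equiv.subLeft, sub_sub_cancel, mul_comm]

lemma one_mul' (a : Ww W) : 1 * a = a := by
  refine Subtype.ext (funext fun k => ?_)
  show conv (delta 0) a k = a.1 k
  unfold conv
  have h : (fun l => (delta 0 : Ww W).1 l * a.1 (k - l))
      = fun l => if l = 0 then a.1 k else 0 := by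
    funext l
    by_cases h : l = 0 <;> simp [delta, h]
  rw [h, tsum_ite_eq]

lemma left_distrib' (a b c : Ww W) : a * (b + c) = a * b + a * c := by
  refine Subtype.ext (funext fun k => ?_)
  show conv a (b + c) k = conv a b k + conv a c k
  unfold conv
  rw [← Summable.tsum_add (summable_conv a b k) (summable_conv a c k)]
  apply tsum_congr; intro l
  show a.1 l * (b.1 (k - l) + c.1 (k - l)) = _
  ring

lemma zero_mul' (a : Ww W) : 0 * a = 0 := by
  refine Subtype.ext (funext fun k => ?_)
  show conv 0 a k = 0
  unfold conv
  simp

lemma mul_zero' (a : Ww W) : a * 0 = 0 := by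
  rw [mul_comm']; exact zero_mul' a

lemma smul_mul (c : ℂ) (a b : Ww W) : (c • a) * b = c • (a * b) := by
  refine Subtype.ext (funext fun k => ?_)
  show conv (c • a) b k = c * conv a b k
  unfold conv
  rw [← tsum_mul_left]
  apply tsum_congr; intro l
  show (c * a.1 l) * b.1 (k - l) = c * (a.1 l * b.1 (k - l))
  ring

set_option maxHeartbeats 1000000 in
lemma mul_assoc' (a b c : Ww W) : a * b * c = a * (b * c) := by
  refine Subtype.ext (funext fun k => ?_)
  show conv (a * b) c k = conv a (b * c) k
  -- the complex-valued kernel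
  set F : ℤ × ℤ → ℂ := fun p => a.1 p.2 * b.1 (p.1 - p.2) * c.1 (k - p.1) with hF
  have hFnorm : Summable fun p : ℤ × ℤ => ‖F p‖ := by
    have h0 : Summable fun p : ℤ × ℤ => ‖a.1 p.2‖ * ‖b.1 (p.1 - p.2)‖ := by
      have hP : Summable fun p : ℤ × ℤ => ‖a.1 p.1‖ * ‖b.1 p.2‖ :=
        (summable_norm a).mul_of_nonneg (summable_norm b)
          (fun _ => norm_nonneg _) (fun _ => norm_nonneg _)
      have hS : Summable ((fun p : ℤ × ℤ => ‖a.1 p.2‖ * ‖b.1 (p.1 - p.2)‖) ∘ eAux) := by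
        have : ((fun p : ℤ × ℤ => ‖a.1 p.2‖ * ‖b.1 (p.1 - p.2)‖) ∘ eAux)
            = fun p : ℤ × ℤ => ‖a.1 p.1‖ * ‖b.1 p.2‖ := by
          funext p; simp [eAux, Function.comp]
        rw [this]; exact hP
      exact (Equiv.summable_iff eAux).1 hS
    refine Summable.of_nonneg_of_le (fun _ => norm_nonneg _) (fun p => ?_)
      (h0.mul_right (nw c))
    calc ‖F p‖ ≤ ‖a.1 p.2 * b.1 (p.1 - p.2)‖ * ‖c.1 (k - p.1)‖ := norm_mul_le _ _
      _ ≤ (‖a.1 p.2‖ * ‖b.1 (p.1 - p.2)‖) * ‖c.1 (k - p.1)‖ :=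
          mul_le_mul_of_nonneg_right (norm_mul_le _ _) (norm_nonneg _)
      _ ≤ (‖a.1 p.2‖ * ‖b.1 (p.1 - p.2)‖) * nw c :=
          mul_le_mul_of_nonneg_left (coeff_le c _) (by positivity)
  have hFs : Summable F := hFnorm.of_norm
  have hLHS : conv (a * b) c k = ∑' p : ℤ × ℤ, F p := by
    rw [Summable.tsum_prod hFs]
    unfold conv
    apply tsum_congr; intro l
    show (∑' m, a.1 m * b.1 (l - m)) * c.1 (k - l) = _
    rw [← (summable_conv a b l).tsum_mul_right (c.1 (k - l))]
  have he2 : ∀ q : ℤ × ℤ, F (eAux q) = a.1 q.1 * b.1 q.2 * c.1 (k - q.1 - q.2) := by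
    intro q
    show a.1 q.1 * b.1 (q.1 + q.2 - q.1) * c.1 (k - (q.1 + q.2)) = _
    rw [add_sub_cancel_left, ← sub_sub]
  have hGs : Summable (fun q : ℤ × ℤ => F (eAux q)) := (Equiv.summable_iff eAux).2 hFs
  have hRHS : conv a (b * c) k = ∑' q : ℤ × ℤ, F (eAux q) := by
    rw [Summable.tsum_prod hGs]
    unfold conv
    apply tsum_congr; intro m
    show a.1 m * (∑' j, b.1 j * c.1 (k - m - j)) = ∑' j, F (eAux (m, j))
    rw [← tsum_mul_left]
    apply tsum_congr; intro j
    rw [he2 (m, j)]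
    ring
  rw [hLHS, hRHS, Equiv.tsum_eq eAux F]

noncomputable instance : CommRing (Ww W) :=
  { (inferInstance : AddCommGroup (Ww W)) with
    mul := (· * ·)
    one := 1
    mul_assoc := mul_assoc'
    one_mul := one_mul'
    mul_one := fun a => by rw [mul_comm']; exact one_mul' a
    left_distrib := left_distrib'
    right_distrib := fun a b c => by
      rw [mul_comm' (a + b) c, left_distrib', mul_comm' c a, mul_comm' c b]
    zero_mul := zero_mul'
    mul_zero := mul_zero'
    mul_comm := mul_comm' }

noncomputable instance : Module ℂ (Ww W) where
  one_smul a := Subtype.ext (funext fun k => one_mul _)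
  mul_smul c d a := Subtype.ext (funext fun k => mul_assoc _ _ _)
  smul_zero c := Subtype.ext (funext fun k => mul_zero _)
  smul_add c a b := Subtype.ext (funext fun k => mul_add _ _ _)
  add_smul c d a := Subtype.ext (funext fun k => add_mul _ _ _)
  zero_smul a := Subtype.ext (funext fun k => zero_mul _)

noncomputable instance : Algebra ℂ (Ww W) :=
  Algebra.ofModule smul_mul (fun c a b => by
    rw [mul_comm' a (c • b), smul_mul, mul_comm' b a])


noncomputable instance : NormedAddCommGroup (Ww W) :=
  AddGroupNorm.toNormedAddCommGroup
  { toFun := fun a => nw a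
    map_zero' := by simp [nw]
    add_le' := fun a b => by
      have h1 : ∀ k, ‖(a + b).1 k‖ * W.w k ≤ ‖a.1 k‖ * W.w k + ‖b.1 k‖ * W.w k := by
        intro k
        calc ‖a.1 k + b.1 k‖ * W.w k ≤ (‖a.1 k‖ + ‖b.1 k‖) * W.w k :=
              mul_le_mul_of_nonneg_right (norm_add_le _ _) (wnn k)
          _ = _ := by ring
      calc nw (a + b) ≤ ∑' k, (‖a.1 k‖ * W.w k + ‖b.1 k‖ * W.w k) :=
            Summable.tsum_le_tsum h1 (a + b).2 (a.2.add b.2)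
        _ = nw a + nw b := Summable.tsum_add a.2 b.2
    neg' := fun a => by
      unfold nw
      apply tsum_congr; intro k; simp
    eq_zero_of_map_eq_zero' := fun a h => by
      refine Subtype.ext (funext fun k => ?_)
      by_contra hk
      have h1 : 0 < ‖a.1 k‖ * W.w k :=
        mul_pos (norm_pos_iff.2 hk) (W.pos k)
      have h2 := Summable.tsum_pos a.2 (fun j => term_nonneg a j) k h1
      have h3 : nw a = 0 := h
      rw [show (∑' j, ‖a.1 j‖ * W.w j) = nw a from rfl, h3] at h2
      exact lt_irrefl 0 h2 }

lemma norm_def (a : Ww W) : ‖a‖ = ∑' k, ‖a.1 k‖ * W.w k := rfl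

lemma norm_delta (n : ℤ) : ‖(delta n : Ww W)‖ = W.w n := by
  rw [norm_def]
  have h : (fun k => ‖(delta n : Ww W).1 k‖ * W.w k)
      = fun k => if k = n then W.w n else 0 := by
    funext k; by_cases h : k = n <;> simp [delta, h]
  rw [h, tsum_ite_eq]

noncomputable instance : NormedCommRing (Ww W) :=
  { (inferInstance : NormedAddCommGroup (Ww W)), (inferInstance : CommRing (Ww W)) with
    norm_mul_le := fun a b => tsum_convW_le a b }

noncomputable instance : NormedAlgebra ℂ (Ww W) :=
  { (inferInstance : Algebra ℂ (Ww W)) with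
    norm_smul_le := fun c a => by
      rw [norm_def, norm_def]
      rw [← tsum_mul_left (a := ‖c‖)]
      apply le_of_eq
      apply tsum_congr; intro k
      show ‖c * a.1 k‖ * W.w k = ‖c‖ * (‖a.1 k‖ * W.w k)
      rw [norm_mul]; ring }

/-- the isometric identification with `lp 1` used to transfer completeness -/
noncomputable def toLp (a : Ww W) : lp (fun _ : ℤ => ℂ) 1 :=
  ⟨fun k => a.1 k * (W.w k : ℂ), by
    apply memℓp_gen
    have : (fun k => ‖a.1 k * (W.w k : ℂ)‖ ^ (1 : ℝ≥0∞).toReal)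
        = fun k => ‖a.1 k‖ * W.w k := by
      funext k
      rw [ENNReal.toReal_one, Real.rpow_one, norm_mul, Complex.norm_real,
        Real.norm_of_nonneg (wnn k)]
    rw [this]; exact a.2⟩

lemma toLp_norm (a : Ww W) : ‖toLp a‖ = ‖a‖ := by
  rw [lp.norm_eq_tsum_rpow (by norm_num) (toLp a)]
  have h : (fun k => ‖(toLp a) k‖ ^ (1 : ℝ≥0∞).toReal) = fun k => ‖a.1 k‖ * W.w k := by
    funext k
    show ‖a.1 k * (W.w k : ℂ)‖ ^ (1 : ℝ≥0∞).toReal = _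
    rw [ENNReal.toReal_one, Real.rpow_one, norm_mul, Complex.norm_real,
      Real.norm_of_nonneg (wnn k)]
  rw [h]
  simp [norm_def]

noncomputable def lpEquiv : Ww W ≃ lp (fun _ : ℤ => ℂ) 1 where
  toFun := toLp
  invFun x := ⟨fun k => x k / (W.w k : ℂ), by
    have hx : Summable fun k => ‖x k‖ := by
      have := lp.memℓp x
      rw [memℓp_gen_iff (by norm_num)] at this
      simpa using this
    refine hx.congr fun k => ?_
    have hw : (W.w k : ℂ) ≠ 0 := by
      exact_mod_cast (W.pos k).ne'
    rw [norm_div, Complex.norm_real, Real.norm_of_nonneg (wnn k),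
      div_mul_cancel₀ _ (W.pos k).ne']⟩
  left_inv a := by
    refine Subtype.ext (funext fun k => ?_)
    show a.1 k * (W.w k : ℂ) / (W.w k : ℂ) = a.1 k
    have hw : (W.w k : ℂ) ≠ 0 := by exact_mod_cast (W.pos k).ne'
    field_simp
  right_inv x := by
    apply lp.ext
    funext k
    show (x k / (W.w k : ℂ)) * (W.w k : ℂ) = x k
    have hw : (W.w k : ℂ) ≠ 0 := by exact_mod_cast (W.pos k).ne'
    field_simp

lemma toLp_sub (a b : Ww W) : toLp (a - b) = toLp a - toLp b := by
  apply lp.ext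
  funext k
  show ((a - b).1 k) * (W.w k : ℂ) = (toLp a) k - (toLp b) k
  have : (a - b).1 k = a.1 k - b.1 k := by
    rw [sub_eq_add_neg, add_apply, neg_apply, sub_eq_add_neg]
  rw [this]
  show _ = a.1 k * (W.w k : ℂ) - b.1 k * (W.w k : ℂ)
  ring

noncomputable def lpIsometryEquiv : Ww W ≃ᵢ lp (fun _ : ℤ => ℂ) 1 :=
  { lpEquiv with
    isometry_toFun := Isometry.of_dist_eq fun a b => by
      show dist (toLp a) (toLp b) = dist a b
      rw [dist_eq_norm, dist_eq_norm, ← toLp_sub, toLp_norm] }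

instance : CompleteSpace (Ww W) := by
  haveI : Fact ((1 : ℝ≥0∞) ≤ 1) := ⟨le_rfl⟩
  exact (lpIsometryEquiv (W := W)).completeSpace


lemma delta_mul (m n : ℤ) : (delta m : Ww W) * delta n = delta (m + n) := by
  refine Subtype.ext (funext fun k => ?_)
  show conv (delta m) (delta n) k = _
  unfold conv
  have h : (fun l => (delta m : Ww W).1 l * (delta n : Ww W).1 (k - l))
      = fun l => if l = m then (if k - m = n then (1:ℂ) else 0) else 0 := by
    funext l
    by_cases h : l = m <;> simp [delta, h]
  rw [h, tsum_ite_eq]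
  show (if k - m = n then (1:ℂ) else 0) = (delta (m+n) : Ww W).1 k
  by_cases hk : k = m + n
  · have h2 : k - m = n := by omega
    simp [delta, hk, h2]
  · have h2 : ¬(k - m = n) := by omega
    simp [delta, hk, h2]

lemma one_eq_delta : (1 : Ww W) = delta 0 := rfl

lemma norm_one' : ‖(1 : Ww W)‖ = W.w 0 := norm_delta 0

/-- coefficient evaluation, as a continuous linear map -/
noncomputable def ev (j : ℤ) : Ww W →L[ℂ] ℂ :=
  LinearMap.mkContinuous
    { toFun := fun a => a.1 j
      map_add' := fun a b => rfl
      map_smul' := fun c a => rfl } 1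
    (fun a => by rw [one_mul]; exact coeff_le a j)

@[simp] lemma ev_apply (j : ℤ) (a : Ww W) : ev j a = a.1 j := rfl

lemma summable_smul_delta (a : Ww W) :
    Summable fun k => a.1 k • (delta k : Ww W) := by
  apply Summable.of_norm
  refine a.2.congr fun k => ?_
  rw [norm_smul, norm_delta]

lemma tsum_smul_delta (a : Ww W) : (∑' k, a.1 k • (delta k : Ww W)) = a := by
  refine Subtype.ext (funext fun j => ?_)
  have h1 : (∑' k, a.1 k • (delta k : Ww W)).1 j
      = ev j (∑' k, a.1 k • (delta k : Ww W)) := rfl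
  rw [h1, ContinuousLinearMap.map_tsum _ (summable_smul_delta a)]
  have h2 : (fun k => ev j (a.1 k • (delta k : Ww W)))
      = fun k => if k = j then a.1 j else 0 := by
    funext k
    by_cases h : k = j
    · rw [h]; show a.1 j * (if j = j then (1:ℂ) else 0) = _; simp
    · show a.1 k * (if j = k then (1:ℂ) else 0) = _; simp [h, show ¬ j = k from fun e => h e.symm]
  rw [h2, tsum_ite_eq]

lemma hasSum_smul_delta (a : Ww W) :
    HasSum (fun k => a.1 k • (delta k : Ww W)) a := by
  have := (summable_smul_delta a).hasSum
  rwa [tsum_smul_delta a] at this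


/-- the character e^{2πikt} -/
noncomputable def ech (k : ℤ) (t : ℝ) : ℂ :=
  Complex.exp (2 * Real.pi * Complex.I * (k : ℂ) * (t : ℂ))

lemma norm_ech (k : ℤ) (t : ℝ) : ‖ech k t‖ = 1 := by
  have h : (2 * (Real.pi:ℂ) * Complex.I * (k : ℂ) * (t : ℂ))
      = ((2 * Real.pi * k * t : ℝ) : ℂ) * Complex.I := by
    push_cast; ring
  rw [ech, h, Complex.norm_exp_ofReal_mul_I]

lemma ech_add (k l : ℤ) (t : ℝ) : ech (k + l) t = ech k t * ech l t := by
  rw [ech, ech, ech, ← Complex.exp_add]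
  congr 1; push_cast; ring

lemma ech_zero (t : ℝ) : ech 0 t = 1 := by
  simp [ech]

lemma summable_mul_ech_norm (a : Ww W) (t : ℝ) :
    Summable fun k => ‖a.1 k * ech k t‖ :=
  (summable_norm a).congr fun k => by rw [norm_mul, norm_ech, mul_one]

lemma summable_mul_ech (a : Ww W) (t : ℝ) :
    Summable fun k => a.1 k * ech k t :=
  (summable_mul_ech_norm a t).of_norm

/-- the symbol of `a` at the point `t` -/
noncomputable def sym (t : ℝ) (a : Ww W) : ℂ := ∑' k, a.1 k * ech k t

lemma norm_sym_le (t : ℝ) (a : Ww W) : ‖sym t a‖ ≤ ‖a‖ := by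
  have h1 : ‖sym t a‖ ≤ ∑' k, ‖a.1 k * ech k t‖ :=
    norm_tsum_le_tsum_norm (summable_mul_ech_norm a t)
  have h2 : (∑' k, ‖a.1 k * ech k t‖) ≤ ∑' k, ‖a.1 k‖ * W.w k := by
    refine Summable.tsum_le_tsum (fun k => ?_) (summable_mul_ech_norm a t) a.2
    rw [norm_mul, norm_ech, mul_one]
    exact le_mul_of_one_le_right (norm_nonneg _) (W.one_le k)
  exact h1.trans h2

/-- the symbol at `t` as a continuous linear functional -/
noncomputable def symL (t : ℝ) : Ww W →L[ℂ] ℂ :=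
  LinearMap.mkContinuous
    { toFun := fun a => sym t a
      map_add' := fun a b => by
        unfold sym
        rw [← Summable.tsum_add (summable_mul_ech a t) (summable_mul_ech b t)]
        exact tsum_congr fun k => by
          show (a.1 k + b.1 k) * ech k t = _
          ring
      map_smul' := fun c a => by
        show (∑' k, (c • a).1 k * ech k t) = c • ∑' k, a.1 k * ech k t
        rw [smul_eq_mul, ← tsum_mul_left]
        exact tsum_congr fun k => by
          show (c * a.1 k) * ech k t = c * (a.1 k * ech k t)
          ring } 1
    (fun a => by simpa using norm_sym_le t a)

@[simp] lemma symL_apply (t : ℝ) (a : Ww W) : symL t a = sym t a := rfl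

lemma delta_mul_apply (k : ℤ) (b : Ww W) (j : ℤ) :
    ((delta k : Ww W) * b).1 j = b.1 (j - k) := by
  show conv (delta k) b j = _
  unfold conv
  have h : (fun l => (delta k : Ww W).1 l * b.1 (j - l))
      = fun l => if l = k then b.1 (j - k) else 0 := by
    funext l
    by_cases h : l = k <;> simp [delta, h]
  rw [h, tsum_ite_eq]

lemma sym_delta_mul (t : ℝ) (k : ℤ) (b : Ww W) :
    sym t ((delta k : Ww W) * b) = ech k t * sym t b := by
  unfold sym
  rw [tsum_congr (fun j => by rw [delta_mul_apply k b j])]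
  rw [← Equiv.tsum_eq (Equiv.addRight k) (fun j => b.1 (j - k) * ech j t)]
  have h : (fun j => b.1 ((Equiv.addRight k) j - k) * ech ((Equiv.addRight k) j) t)
      = fun j => (b.1 j * ech j t) * ech k t := by
    funext j
    have h1 : (Equiv.addRight k) j = j + k := rfl
    rw [h1, add_sub_cancel_right, ech_add]
    ring
  rw [h, (summable_mul_ech b t).tsum_mul_right (ech k t)]
  exact mul_comm _ _

lemma sym_mul (t : ℝ) (a b : Ww W) : sym t (a * b) = sym t a * sym t b := by
  have hsum : HasSum (fun k => a.1 k • ((delta k : Ww W) * b)) (a * b) := by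
    have h := (hasSum_smul_delta a).mul_right b
    have he : (fun k => a.1 k • ((delta k : Ww W) * b))
        = fun k => (a.1 k • (delta k : Ww W)) * b :=
      funext fun k => (smul_mul_assoc _ _ _).symm
    rw [he]; exact h
  calc sym t (a * b) = symL t (a * b) := rfl
    _ = ∑' k, symL t (a.1 k • ((delta k : Ww W) * b)) := by
        rw [← hsum.tsum_eq, ContinuousLinearMap.map_tsum _ hsum.summable]
    _ = ∑' k, a.1 k * (ech k t * sym t b) := by
        refine tsum_congr fun k => ?_
        rw [map_smul, smul_eq_mul, symL_apply, sym_delta_mul]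
    _ = (∑' k, a.1 k * ech k t) * sym t b := by
        rw [← (summable_mul_ech a t).tsum_mul_right (sym t b)]
        exact tsum_congr fun k => by ring
    _ = sym t a * sym t b := rfl

lemma sym_one (t : ℝ) : sym t (1 : Ww W) = 1 := by
  unfold sym
  have h : (fun k => (1 : Ww W).1 k * ech k t)
      = fun k => if k = 0 then 1 else 0 := by
    funext k
    by_cases h : k = 0
    · simp [h, ech_zero]
    · simp [h, one_eq_delta, delta]
  rw [h, tsum_ite_eq]

section Char

variable (ψ : Ww W →ₐ[ℂ] ℂ)

lemma psi_tsum_eq (a : Ww W) : ψ a = ∑' k, a.1 k * ψ (delta k) := by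
  conv_lhs => rw [← tsum_smul_delta a]
  have h1 : ψ (∑' k, a.1 k • (delta k : Ww W))
      = ψ.toContinuousLinearMap (∑' k, a.1 k • (delta k : Ww W)) := rfl
  rw [h1, ContinuousLinearMap.map_tsum _ (summable_smul_delta a)]
  exact tsum_congr fun k => by
    rw [show ψ.toContinuousLinearMap (a.1 k • (delta k : Ww W))
      = ψ (a.1 k • (delta k : Ww W)) from rfl, map_smul, smul_eq_mul]

end Char


end Ww

/-! ### real-analysis lemmas for the GRS condition -/

open Filter in
lemma tendsto_rpow_inv_one (C : ℝ) (hC : 0 < C) :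
    Tendsto (fun n : ℕ => C ^ (((n+1 : ℕ) : ℝ))⁻¹) atTop (nhds 1) := by
  have h0 : Tendsto (fun n : ℕ => (((n+1 : ℕ) : ℝ))⁻¹) atTop (nhds 0) :=
    tendsto_inv_atTop_nhds_zero_nat.comp (tendsto_add_atTop_nat 1)
  have := (tendsto_const_nhds (x := C) (f := atTop (α := ℕ))).rpow h0 (Or.inl hC.ne')
  simpa using this

open Filter in
lemma le_one_of_pow_le (x C : ℝ) (hx : 0 ≤ x) (hC : 0 < C) (u : ℕ → ℝ)
    (hu : ∀ n, 0 < u n) (hb : ∀ n : ℕ, x ^ (n+1) ≤ C * u (n+1))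
    (hlim : Tendsto (fun n : ℕ => u n ^ ((n : ℝ)⁻¹)) atTop (nhds 1)) : x ≤ 1 := by
  have hu1 : Tendsto (fun n : ℕ => u (n+1) ^ (((n+1 : ℕ) : ℝ))⁻¹) atTop (nhds 1) :=
    hlim.comp (tendsto_add_atTop_nat 1)
  have hC1 := tendsto_rpow_inv_one C hC
  have hprod : Tendsto
      (fun n : ℕ => C ^ (((n+1 : ℕ) : ℝ))⁻¹ * u (n+1) ^ (((n+1 : ℕ) : ℝ))⁻¹)
      atTop (nhds 1) := by
    have := hC1.mul hu1
    simpa using this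
  refine ge_of_tendsto hprod (Eventually.of_forall fun n => ?_)
  have hn : ((n+1 : ℕ) : ℝ) ≠ 0 := by positivity
  have hxe : x = (x ^ (n+1 : ℕ)) ^ (((n+1 : ℕ) : ℝ))⁻¹ := by
    rw [← Real.rpow_natCast x (n+1), ← Real.rpow_mul hx, mul_inv_cancel₀ hn, Real.rpow_one]
  rw [hxe, ← Real.mul_rpow hC.le (hu (n+1)).le]
  exact Real.rpow_le_rpow (by positivity) (hb n) (by positivity)

open Filter in
lemma one_le_of_pow_le (x : ℝ) (hx : 0 < x) (m : ℕ) (hm : 0 < m) (u : ℕ → ℝ)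
    (hu : ∀ n, 0 < u n) (hb : ∀ n : ℕ, u ((n+1)*m) ≤ x ^ (n+1))
    (hlim : Tendsto (fun n : ℕ => u n ^ ((n : ℝ)⁻¹)) atTop (nhds 1)) : 1 ≤ x := by
  have hmono : Tendsto (fun n : ℕ => (n+1)*m) atTop atTop := by
    refine tendsto_atTop_mono (fun n => ?_) tendsto_id
    calc (id n : ℕ) ≤ n + 1 := Nat.le_succ n
      _ = (n+1) * 1 := (mul_one _).symm
      _ ≤ (n+1) * m := Nat.mul_le_mul_left _ hm
  have hcomp : Tendsto (fun n : ℕ => u ((n+1)*m) ^ ((((n+1)*m : ℕ) : ℝ))⁻¹)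
      atTop (nhds 1) := hlim.comp hmono
  have key : ∀ n : ℕ, u ((n+1)*m) ^ ((((n+1)*m : ℕ) : ℝ))⁻¹ ≤ x ^ ((m : ℝ)⁻¹) := by
    intro n
    have h1 : u ((n+1)*m) ^ ((((n+1)*m : ℕ) : ℝ))⁻¹
        ≤ (x ^ (n+1 : ℕ)) ^ ((((n+1)*m : ℕ) : ℝ))⁻¹ :=
      Real.rpow_le_rpow (hu _).le (hb n) (by positivity)
    refine h1.trans (le_of_eq ?_)
    rw [← Real.rpow_natCast x (n+1), ← Real.rpow_mul hx.le]
    congr 1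
    push_cast
    have hn : ((n:ℝ)+1) ≠ 0 := by positivity
    have hm' : (m:ℝ) ≠ 0 := by positivity
    field_simp
  have h1 : (1:ℝ) ≤ x ^ ((m : ℝ)⁻¹) :=
    le_of_tendsto hcomp (Eventually.of_forall key)
  by_contra h
  push_neg at h
  have := Real.rpow_lt_one hx.le h (by positivity : (0:ℝ) < ((m:ℝ))⁻¹)
  linarith

end LWW




/-- The inverse of a self-adjoint positive definite Laurent operator whose
symbol has coefficients in the weighted Wiener class (with GRS weight) again has
coefficients in the same weighted class. -/
theorem laurent_inverse_wiener
    (w : ℤ → ℝ) (hw_pos : ∀ k, 0 < w k)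
    (hw_sub : ∀ k l, w (k + l) ≤ w k * w l)
    (hGRS_plus : Filter.Tendsto (fun n : ℕ => (w (n : ℤ)) ^ ((n : ℝ)⁻¹))
      Filter.atTop (nhds 1))
    (hGRS_minus : Filter.Tendsto (fun n : ℕ => (w (-(n : ℤ))) ^ ((n : ℝ)⁻¹))
      Filter.atTop (nhds 1))
    (A : ℤ → ℂ) (hA : Summable (fun k => ‖A k‖ * w k))
    (f : ℝ → ℂ)
    (hf : ∀ t : ℝ, f t = ∑' k : ℤ, A k * Complex.exp (2 * Real.pi * Complex.I * (k : ℂ) * (t : ℂ)))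
    -- self-adjointness of the Laurent operator
    (hsa : ∀ k, A (-k) = starRingEnd ℂ (A k))
    -- positive definiteness: the symbol is (real and) strictly positive
    (hpos : ∀ t : ℝ, 0 < (f t).re) :
    ∃ B : ℤ → ℂ, Summable (fun k => ‖B k‖ * w k) ∧
      ∀ t : ℝ, (∑' k : ℤ, B k * Complex.exp (2 * Real.pi * Complex.I * (k : ℂ) * (t : ℂ))) * f t = 1 := by
  classical
  -- powers of the weight
  have hpow : ∀ (m : ℤ) (n : ℕ), w (((n:ℤ)+1) * m) ≤ w m ^ (n+1) := by
    intro m n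
    induction n with
    | zero => simp
    | succ n ih =>
      have hc : ((n+1:ℕ):ℤ) = (n:ℤ)+1 := by push_cast; ring
      rw [hc]
      have h1 : ((n:ℤ)+1+1) * m = ((n:ℤ)+1) * m + m := by ring
      rw [h1]
      calc w (((n:ℤ)+1) * m + m) ≤ w (((n:ℤ)+1) * m) * w m := hw_sub _ _
        _ ≤ w m ^ (n+1) * w m :=
          mul_le_mul_of_nonneg_right ih (hw_pos m).le
        _ = w m ^ (n+1+1) := by ring
  -- the weight is bounded below by 1
  have hw_one : ∀ k : ℤ, 1 ≤ w k := by
    intro k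
    rcases lt_trichotomy k 0 with hk | hk | hk
    · -- negative
      set m : ℕ := (-k).toNat with hm
      have hm0 : 0 < m := by omega
      have hmk : (m : ℤ) = -k := by omega
      refine LWW.one_le_of_pow_le (w k) (hw_pos k) m hm0 (fun n => w (-(n:ℤ)))
        (fun n => hw_pos _) (fun n => ?_) hGRS_minus
      have harg : -(((n+1)*m : ℕ) : ℤ) = ((n:ℤ)+1) * k := by
        push_cast [hmk]; ring
      show w (-(((n+1)*m : ℕ) : ℤ)) ≤ w k ^ (n+1)
      rw [harg]
      exact hpow k n
    · subst hk
      have h00 : w 0 ≤ w 0 * w 0 := by simpa using hw_sub 0 0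
      nlinarith [hw_pos 0]
    · -- positive
      set m : ℕ := k.toNat with hm
      have hm0 : 0 < m := by omega
      have hmk : (m : ℤ) = k := by omega
      refine LWW.one_le_of_pow_le (w k) (hw_pos k) m hm0 (fun n => w (n:ℤ))
        (fun n => hw_pos _) (fun n => ?_) hGRS_plus
      have harg : ((((n+1)*m : ℕ)) : ℤ) = ((n:ℤ)+1) * k := by
        push_cast [hmk]; ring
      show w ((((n+1)*m : ℕ)) : ℤ) ≤ w k ^ (n+1)
      rw [harg]
      exact hpow k n
  set W : LWW.Weight := ⟨w, hw_pos, hw_sub, hw_one⟩ with hW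
  set a : LWW.Ww W := ⟨A, hA⟩ with ha
  -- `a` is invertible in the weighted Wiener algebra
  have hunit : IsUnit a := by
    by_contra hn
    obtain ⟨φ, hφ⟩ := WeakDual.CharacterSpace.exists_apply_eq_zero hn
    set ψ : LWW.Ww W →ₐ[ℂ] ℂ := WeakDual.CharacterSpace.equivAlgHom φ with hψdef
    have hψa : ψ a = 0 := by
      show (WeakDual.CharacterSpace.equivAlgHom φ) a = 0
      rw [WeakDual.CharacterSpace.equivAlgHom_coe]
      exact hφ
    set z : ℂ := ψ (LWW.Ww.delta 1) with hz
    set z' : ℂ := ψ (LWW.Ww.delta (-1)) with hz'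
    have hzz' : z * z' = 1 := by
      rw [hz, hz', ← map_mul, LWW.Ww.delta_mul]
      have h0 : (1:ℤ) + -1 = 0 := by norm_num
      rw [h0, ← LWW.Ww.one_eq_delta, map_one]
    have hψpow : ∀ n : ℕ, ψ (LWW.Ww.delta ((n:ℤ)+1)) = z ^ (n+1) := by
      intro n
      induction n with
      | zero => simp [hz]
      | succ n ih =>
        have hc : ((n+1:ℕ):ℤ) = (n:ℤ)+1 := by push_cast; ring
        rw [hc]
        have h1 : ((n:ℤ)+1+1) = ((n:ℤ)+1) + 1 := by ring
        rw [h1, ← LWW.Ww.delta_mul, map_mul, ih, ← hz]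
        ring
    have hψpow' : ∀ n : ℕ, ψ (LWW.Ww.delta (-((n:ℤ)+1))) = z' ^ (n+1) := by
      intro n
      induction n with
      | zero => simp [hz']
      | succ n ih =>
        have hc : ((n+1:ℕ):ℤ) = (n:ℤ)+1 := by push_cast; ring
        rw [hc]
        have h1 : (-((n:ℤ)+1+1)) = (-((n:ℤ)+1)) + (-1) := by ring
        rw [h1, ← LWW.Ww.delta_mul, map_mul, ih, ← hz']
        ring
    have hnorm1 : ‖(1 : LWW.Ww W)‖ = w 0 := LWW.Ww.norm_one'
    have hpsile : ∀ x : LWW.Ww W, ‖ψ x‖ ≤ ‖x‖ * w 0 := by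
      intro x
      have := AlgHom.norm_apply_le_self_mul_norm_one ψ x
      rwa [hnorm1] at this
    have hzle : ‖z‖ ≤ 1 := by
      refine LWW.le_one_of_pow_le ‖z‖ (w 0) (norm_nonneg z) (hw_pos 0)
        (fun n => w (n:ℤ)) (fun n => hw_pos _) (fun n => ?_) hGRS_plus
      have h1 : ‖z‖ ^ (n+1) = ‖ψ (LWW.Ww.delta ((n:ℤ)+1))‖ := by
        rw [hψpow n, norm_pow]
      rw [h1]
      have h2 := hpsile (LWW.Ww.delta ((n:ℤ)+1))
      rw [LWW.Ww.norm_delta] at h2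
      have h3 : ((n:ℤ)+1) = (((n+1 : ℕ)):ℤ) := by push_cast; ring
      rw [h3] at h2
      calc ‖ψ (LWW.Ww.delta (((n+1:ℕ)):ℤ))‖ ≤ W.w (((n+1:ℕ)):ℤ) * w 0 := h2
        _ = w 0 * w (((n+1:ℕ)):ℤ) := by rw [mul_comm]
      
    have hz'le : ‖z'‖ ≤ 1 := by
      refine LWW.le_one_of_pow_le ‖z'‖ (w 0) (norm_nonneg z') (hw_pos 0)
        (fun n => w (-(n:ℤ))) (fun n => hw_pos _) (fun n => ?_) hGRS_minus
      have h1 : ‖z'‖ ^ (n+1) = ‖ψ (LWW.Ww.delta (-((n:ℤ)+1)))‖ := by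
        rw [hψpow' n, norm_pow]
      rw [h1]
      have h2 := hpsile (LWW.Ww.delta (-((n:ℤ)+1)))
      rw [LWW.Ww.norm_delta] at h2
      have h3 : (-((n:ℤ)+1)) = -(((n+1 : ℕ)):ℤ) := by push_cast; ring
      rw [h3] at h2
      calc ‖ψ (LWW.Ww.delta (-(((n+1:ℕ)):ℤ)))‖ ≤ W.w (-(((n+1:ℕ)):ℤ)) * w 0 := h2
        _ = w 0 * w (-(((n+1:ℕ)):ℤ)) := by rw [mul_comm]
    have hz1 : ‖z‖ = 1 := by
      have hmul : ‖z‖ * ‖z'‖ = 1 := by rw [← norm_mul, hzz', norm_one]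
      nlinarith [norm_nonneg z, norm_nonneg z']
    have hzne : z ≠ 0 := by
      intro h; rw [h, norm_zero] at hz1; norm_num at hz1
    -- the point on the torus
    set t : ℝ := Complex.arg z / (2 * Real.pi) with ht
    have hecht : LWW.Ww.ech 1 t = z := by
      have harg : (2 * (Real.pi:ℂ) * Complex.I * ((1:ℤ) : ℂ) * (t : ℂ))
          = (Complex.arg z : ℂ) * Complex.I := by
        rw [ht]
        push_cast
        have hpi : (Real.pi : ℂ) ≠ 0 := by
          exact_mod_cast Real.pi_ne_zero
        field_simp
      rw [LWW.Ww.ech, harg]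
      have := Complex.norm_mul_exp_arg_mul_I z
      rw [hz1] at this
      simpa using this
    have hecht' : LWW.Ww.ech (-1) t = z' := by
      have h1 : LWW.Ww.ech 1 t * LWW.Ww.ech (-1) t = 1 := by
        rw [← LWW.Ww.ech_add]; norm_num [LWW.Ww.ech_zero]
      rw [hecht] at h1
      have h2 : z * z' = z * LWW.Ww.ech (-1) t := by rw [hzz', h1]
      exact (mul_left_cancel₀ hzne h2.symm)
    have hψδ : ∀ k : ℤ, ψ (LWW.Ww.delta k) = LWW.Ww.ech k t := by
      intro k
      induction k using Int.induction_on with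
      | zero => rw [← LWW.Ww.one_eq_delta, map_one, LWW.Ww.ech_zero]
      | succ n ih =>
        rw [← LWW.Ww.delta_mul, map_mul, ih, ← hz, ← hecht, ← LWW.Ww.ech_add]
      | pred n ih =>
        have h1 : (-(n:ℤ) - 1) = (-(n:ℤ)) + (-1) := by ring
        rw [h1, ← LWW.Ww.delta_mul, map_mul, ih, ← hz', ← hecht', ← LWW.Ww.ech_add]
    have hψaf : ψ a = f t := by
      rw [LWW.Ww.psi_tsum_eq, hf t]
      exact tsum_congr fun k => by rw [hψδ k]; rfl
    have hfne : f t ≠ 0 := by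
      intro h
      have := hpos t
      rw [h] at this
      simp at this
    rw [hψa] at hψaf
    exact hfne hψaf.symm
  -- extract the inverse
  obtain ⟨u, hu⟩ := hunit
  set b : LWW.Ww W := ((u⁻¹ : (LWW.Ww W)ˣ) : LWW.Ww W) with hb
  have hab : b * a = 1 := by rw [← hu, hb]; exact u.inv_mul
  refine ⟨b.1, b.2, fun t => ?_⟩
  have h1 : (∑' k : ℤ, b.1 k * Complex.exp (2 * Real.pi * Complex.I * (k : ℂ) * (t : ℂ)))
      = LWW.Ww.sym t b := rfl
  have h2 : f t = LWW.Ww.sym t a := by rw [hf t]; rfl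
  rw [h1, h2, ← LWW.Ww.sym_mul, hab, LWW.Ww.sym_one]
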